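/- arXiv:0911.4727 — 4 statements merged into one kernel-verified Lean document; each statement's English description precedes it below -/
import Mathlib

section
/- Let D be a coherent and exchangeable set of gambles on X^N. Then for all gambles f and f' on X^N: (i) f ∈ D if and only if ex^N(f) ∈ D; (ii) if ex^N(f) = ex^N(f'), then f ∈ D if and only if f' ∈ D. -/
variable {X : Type*} [Fintype X] [DecidableEq X] [Nonempty X]

/-- `ex^N(f)`: the uniform average of all permuted versions `π^t f` of `f`,
where `(π^t f)(x) = f(x ∘ π)`. -/
noncomputable def exg {X : Type*} (N : ℕ) (f : (Fin N → X) → ℝ) : (Fin N → X) → ℝ :=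
  fun x => (∑ π : Equiv.Perm (Fin N), f (x ∘ π)) / (N.factorial : ℝ)

/-- `W_{A_N}`: the linear span of the gambles `f - π^t f`, which is the kernel of
the projection operator `ex^N`. -/
def WA (X : Type*) (N : ℕ) : Set ((Fin N → X) → ℝ) := {f | exg N f = 0}

/-- A coherent set of desirable gambles on a set of possibilities `Y`. -/
def Coherent {Y : Type*} (D : Set (Y → ℝ)) : Prop :=
  (0 : Y → ℝ) ∉ D ∧ (∀ f : Y → ℝ, 0 ≤ f → f ≠ 0 → f ∈ D) ∧
  (∀ f ∈ D, ∀ c : ℝ, 0 < c → c • f ∈ D) ∧ ∀ f ∈ D, ∀ g ∈ D, f + g ∈ D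

/-- A set of desirable gambles on `X^N` is exchangeable if `W_{A_N} + D ⊆ D`. -/
def Exchangeable (X : Type*) (N : ℕ) (D : Set ((Fin N → X) → ℝ)) : Prop :=
  ∀ f ∈ WA X N, ∀ g ∈ D, f + g ∈ D

lemma exg_sub {X : Type*} (N : ℕ) (f g : (Fin N → X) → ℝ) :
    exg N (f - g) = exg N f - exg N g := by
  funext x
  simp [exg, Finset.sum_sub_distrib, sub_div]

lemma exg_perm_inv {X : Type*} (N : ℕ) (f : (Fin N → X) → ℝ)
    (x : Fin N → X) (π : Equiv.Perm (Fin N)) : exg N f (x ∘ π) = exg N f x := by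
  unfold exg
  congr 1
  rw [← Equiv.sum_comp (Equiv.mulLeft π) (fun σ => f (x ∘ σ))]
  apply Finset.sum_congr rfl
  intro σ _
  congr 1

lemma exg_exg {X : Type*} (N : ℕ) (f : (Fin N → X) → ℝ) :
    exg N (exg N f) = exg N f := by
  funext x
  have h : ∀ π : Equiv.Perm (Fin N), exg N f (x ∘ π) = exg N f x :=
    exg_perm_inv N f x
  show (∑ π : Equiv.Perm (Fin N), exg N f (x ∘ π)) / (N.factorial : ℝ) = exg N f x
  rw [Finset.sum_congr rfl (fun π _ => h π), Finset.sum_const]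
  simp [Fintype.card_perm]
  field_simp

theorem exchangeability_via_ex {N : ℕ} (hN : 1 ≤ N)
    (D : Set ((Fin N → X) → ℝ)) (hcoh : Coherent D) (hexch : Exchangeable X N D) :
    (∀ f : (Fin N → X) → ℝ, (f ∈ D ↔ exg N f ∈ D)) ∧
    ∀ f f' : (Fin N → X) → ℝ, exg N f = exg N f' → (f ∈ D ↔ f' ∈ D) := by
  have key : ∀ f : (Fin N → X) → ℝ, f ∈ D ↔ exg N f ∈ D := by
    intro f
    constructor
    · intro hf
      have hw : exg N f - f ∈ WA X N := by
        simp [WA, exg_sub, exg_exg]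
      have := hexch _ hw f hf
      simpa using this
    · intro hf
      have hw : f - exg N f ∈ WA X N := by
        simp [WA, exg_sub, exg_exg]
      have := hexch _ hw _ hf
      simpa using this
  refine ⟨key, fun f f' h => ?_⟩
  rw [key f, key f', h]
end

section
/- Let P be a coherent lower prevision on G(X^N), i.e., P = P_D for some coherent set D of gambles on X^N, where P_D(f) := sup{μ ∈ ℝ : f − μ ∈ D}, and let P̄(f) := −P(−f) be its conjugate upper prevision. Then the following are equivalent: (i) P is exchangeable, i.e., P = P_D for some coherent and exchangeable set D of gambles on X^N; (ii) P(f) = P̄(f) = 0 for all f ∈ W_{P_N}; (iii) P(f) = P̄(f) = 0 for all f ∈ W_{A_N}. -/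
variable {X : Type*} [Fintype X] [DecidableEq X] [Nonempty X]

/-- `W_{P_N}`: the set of gambles of the form `f - π^t f`. -/
def WP (X : Type*) (N : ℕ) : Set ((Fin N → X) → ℝ) :=
  {g | ∃ (f : (Fin N → X) → ℝ) (π : Equiv.Perm (Fin N)), g = f - fun x => f (x ∘ π)}

/-- The lower prevision associated with a set `A` of gambles:
`P_A(f) = sup {μ : f - μ ∈ A}`. -/
noncomputable def lpr {Y : Type*} (A : Set (Y → ℝ)) (f : Y → ℝ) : ℝ :=
  sSup {μ : ℝ | (f - fun _ => μ) ∈ A}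

/- ### Auxiliary lemmas -/

lemma aux_le_of_forall_sub {a b : ℝ} (h : ∀ ε : ℝ, 0 < ε → a - ε ≤ b) : a ≤ b := by
  by_contra hc
  push_neg at hc
  have := h ((a - b) / 2) (by linarith)
  linarith

section CohLemmas

variable {Y : Type*} [Fintype Y] [Nonempty Y] {A : Set (Y → ℝ)}

lemma aux_pos_mem (hA : Coherent A) {f : Y → ℝ} (h0 : ∀ x, 0 < f x) : f ∈ A := by
  refine hA.2.1 f (fun x => (h0 x).le) (fun hf => ?_)
  have h1 := congrFun hf (Classical.arbitrary Y)
  simp only [Pi.zero_apply] at h1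
  exact absurd h1 (h0 _).ne'

lemma aux_S_mem_of_lt (hA : Coherent A) {f : Y → ℝ} {μ : ℝ} (h : ∀ x, μ < f x) :
    (f - fun _ => μ) ∈ A :=
  aux_pos_mem hA (fun x => sub_pos.2 (h x))

lemma aux_S_nonempty (hA : Coherent A) (f : Y → ℝ) :
    {μ : ℝ | (f - fun _ => μ) ∈ A}.Nonempty := by
  refine ⟨Finset.univ.inf' Finset.univ_nonempty f - 1, aux_S_mem_of_lt hA fun x => ?_⟩
  have := Finset.inf'_le f (Finset.mem_univ x)
  linarith

lemma aux_S_bdd (hA : Coherent A) (f : Y → ℝ) :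
    BddAbove {μ : ℝ | (f - fun _ => μ) ∈ A} := by
  refine ⟨Finset.univ.sup' Finset.univ_nonempty f, fun μ hμ => ?_⟩
  by_contra h
  push_neg at h
  have hpos : ((fun _ => μ) - f) ∈ A := aux_pos_mem hA fun x => by
    have hx := Finset.le_sup' f (Finset.mem_univ x)
    simp only [Pi.sub_apply]
    linarith
  have hs := hA.2.2.2 _ hμ _ hpos
  have h0 : (f - fun _ => μ) + ((fun _ => μ) - f) = (0 : Y → ℝ) := by
    funext x; simp
  rw [h0] at hs
  exact hA.1 hs

lemma aux_le_lpr (hA : Coherent A) {f : Y → ℝ} {μ : ℝ} (h : (f - fun _ => μ) ∈ A) :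
    μ ≤ lpr A f :=
  le_csSup (aux_S_bdd hA f) h

lemma aux_lpr_le (hA : Coherent A) {f : Y → ℝ} {μ : ℝ} (h : ∀ x, f x ≤ μ) : lpr A f ≤ μ := by
  refine csSup_le (aux_S_nonempty hA f) (fun ν hν => ?_)
  by_contra hc
  push_neg at hc
  have hpos : ((fun _ => ν) - f) ∈ A := aux_pos_mem hA fun x => by
    simp only [Pi.sub_apply]; linarith [h x]
  have hs := hA.2.2.2 _ hν _ hpos
  have h0 : (f - fun _ => ν) + ((fun _ => ν) - f) = (0 : Y → ℝ) := by funext x; simp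
  rw [h0] at hs
  exact hA.1 hs

lemma aux_inf_le_lpr (hA : Coherent A) {f : Y → ℝ} {μ : ℝ} (h : ∀ x, μ ≤ f x) :
    μ ≤ lpr A f := by
  refine aux_le_of_forall_sub (fun ε hε => ?_)
  exact aux_le_lpr hA (aux_S_mem_of_lt hA fun x => by linarith [h x])

lemma aux_lpr_zero (hA : Coherent A) : lpr A (0 : Y → ℝ) = 0 :=
  le_antisymm (aux_lpr_le hA fun _ => le_rfl) (aux_inf_le_lpr hA fun _ => le_rfl)

lemma aux_lpr_add (hA : Coherent A) (f g : Y → ℝ) :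
    lpr A f + lpr A g ≤ lpr A (f + g) := by
  have h1 : lpr A f ≤ lpr A (f + g) - lpr A g := by
    refine csSup_le (aux_S_nonempty hA f) (fun μ hμ => ?_)
    have h2 : lpr A g ≤ lpr A (f + g) - μ := by
      refine csSup_le (aux_S_nonempty hA g) (fun ν hν => ?_)
      have hsum := hA.2.2.2 _ hμ _ hν
      have he : (f - fun _ => μ) + (g - fun _ => ν) = (f + g) - fun _ => (μ + ν) := by
        funext x; simp only [Pi.sub_apply, Pi.add_apply, Pi.neg_apply, Pi.smul_apply, smul_eq_mul]; ring
      rw [he] at hsum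
      have := aux_le_lpr hA hsum
      linarith
    linarith
  linarith

lemma aux_lpr_sum (hA : Coherent A) {ι : Type*} (s : Finset ι) (g : ι → (Y → ℝ)) :
    ∑ i ∈ s, lpr A (g i) ≤ lpr A (∑ i ∈ s, g i) := by
  induction s using Finset.cons_induction with
  | empty => simp [aux_lpr_zero hA]
  | cons i s hi ih =>
      rw [Finset.sum_cons, Finset.sum_cons]
      calc lpr A (g i) + ∑ j ∈ s, lpr A (g j) ≤ lpr A (g i) + lpr A (∑ j ∈ s, g j) := by
            linarith
        _ ≤ lpr A (g i + ∑ j ∈ s, g j) := aux_lpr_add hA _ _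

lemma aux_lpr_smul (hA : Coherent A) {c : ℝ} (hc : 0 < c) (f : Y → ℝ) :
    c * lpr A f ≤ lpr A (c • f) := by
  rw [mul_comm, ← le_div_iff₀ hc]
  refine csSup_le (aux_S_nonempty hA f) (fun μ hμ => ?_)
  have h1 : (c • f - fun _ => c * μ) ∈ A := by
    have := hA.2.2.1 _ hμ c hc
    have he : c • (f - fun _ => μ) = c • f - fun _ => c * μ := by
      funext x; simp only [Pi.sub_apply, Pi.add_apply, Pi.neg_apply, Pi.smul_apply, smul_eq_mul]; ring
    rwa [he] at this
  have := aux_le_lpr hA h1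
  rw [le_div_iff₀ hc]
  linarith

lemma aux_lpr_shift (hA : Coherent A) (f : Y → ℝ) (μ : ℝ) :
    lpr A (f - fun _ => μ) = lpr A f - μ := by
  apply le_antisymm
  · refine csSup_le (aux_S_nonempty hA _) (fun ν hν => ?_)
    have hν' : ((f - fun _ => μ) - fun _ => ν) ∈ A := hν
    have he : ((f - fun _ => μ) - fun _ => ν) = f - fun _ => (μ + ν) := by
      funext x; simp only [Pi.sub_apply, Pi.add_apply, Pi.neg_apply, Pi.smul_apply, smul_eq_mul]; ring
    rw [he] at hν'
    have := aux_le_lpr hA hν'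
    linarith
  · rw [sub_le_iff_le_add]
    refine csSup_le (aux_S_nonempty hA f) (fun ν hν => ?_)
    have hν' : (f - fun _ => ν) ∈ A := hν
    have he : (f - fun _ => ν) = ((f - fun _ => μ) - fun _ => (ν - μ)) := by
      funext x; simp only [Pi.sub_apply, Pi.add_apply, Pi.neg_apply, Pi.smul_apply, smul_eq_mul]; ring
    rw [he] at hν'
    have := aux_le_lpr hA hν'
    linarith

lemma aux_lpr_conj (hA : Coherent A) (f : Y → ℝ) : lpr A f ≤ - lpr A (-f) := by
  have h := aux_lpr_add hA f (-f)
  rw [add_neg_cancel, aux_lpr_zero hA] at h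
  linarith

end CohLemmas

/- ### exg / WA / WP lemmas -/

section ExgLemmas

variable {N : ℕ}

lemma aux_exg_add (f g : (Fin N → X) → ℝ) : exg N (f + g) = exg N f + exg N g := by
  funext x
  simp [exg, Finset.sum_add_distrib, add_div]

lemma aux_exg_neg (f : (Fin N → X) → ℝ) : exg N (-f) = - exg N f := by
  funext x
  simp [exg, Finset.sum_neg_distrib, neg_div]

lemma aux_exg_smul (c : ℝ) (f : (Fin N → X) → ℝ) : exg N (c • f) = c • exg N f := by
  funext x
  simp [exg, ← Finset.mul_sum, mul_div_assoc]

lemma aux_exg_perm (f : (Fin N → X) → ℝ) (π : Equiv.Perm (Fin N)) :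
    exg N (fun x => f (x ∘ π)) = exg N f := by
  funext x
  simp only [exg]
  congr 1
  refine Fintype.sum_equiv (Equiv.mulRight π) _ _ (fun σ => ?_)
  congr 1

lemma aux_WA_zero : (0 : (Fin N → X) → ℝ) ∈ WA X N := by
  show exg N 0 = 0
  funext x
  simp [exg]

lemma aux_WA_add {f g : (Fin N → X) → ℝ} (hf : f ∈ WA X N) (hg : g ∈ WA X N) :
    f + g ∈ WA X N := by
  show exg N (f + g) = 0
  rw [aux_exg_add, hf, hg, add_zero]

lemma aux_WA_neg {f : (Fin N → X) → ℝ} (hf : f ∈ WA X N) : -f ∈ WA X N := by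
  show exg N (-f) = 0
  rw [aux_exg_neg, hf, neg_zero]

lemma aux_WA_smul {f : (Fin N → X) → ℝ} (c : ℝ) (hf : f ∈ WA X N) : c • f ∈ WA X N := by
  show exg N (c • f) = 0
  rw [aux_exg_smul, hf, smul_zero]

lemma aux_WP_subset_WA : WP X N ⊆ WA X N := by
  rintro g ⟨f, π, rfl⟩
  show exg N _ = 0
  have he : (f - fun x => f (x ∘ π)) = f + -(fun x => f (x ∘ π)) := by
    funext x; simp [sub_eq_add_neg]
  rw [he, aux_exg_add, aux_exg_neg, aux_exg_perm, add_neg_cancel]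

lemma aux_exg_ne_zero {p : (Fin N → X) → ℝ} (h0 : 0 ≤ p) (hne : p ≠ 0) :
    exg N p ≠ 0 := by
  have hx : ∃ x, p x ≠ 0 := by
    by_contra h
    push_neg at h
    exact hne (funext h)
  obtain ⟨x0, hx0⟩ := hx
  have hpos : 0 < p x0 := lt_of_le_of_ne (h0 x0) (Ne.symm hx0)
  intro h
  have h1 := congrFun h x0
  have h2 : (0 : ℝ) < ∑ π : Equiv.Perm (Fin N), p (x0 ∘ π) := by
    refine Finset.sum_pos' (fun π _ => h0 _) ⟨1, Finset.mem_univ _, ?_⟩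
    have : x0 ∘ ⇑(1 : Equiv.Perm (Fin N)) = x0 := by funext i; simp
    rw [this]
    exact hpos
  have h3 : (0 : ℝ) < (N.factorial : ℝ) := by
    exact_mod_cast N.factorial_pos
  simp only [exg, Pi.zero_apply] at h1
  have := div_pos h2 h3
  linarith

lemma aux_WA_decomp {w : (Fin N → X) → ℝ} (hw : w ∈ WA X N) :
    ∑ π : Equiv.Perm (Fin N), (w - fun x => w (x ∘ π)) = (N.factorial : ℝ) • w := by
  have hsum : ∀ x, ∑ π : Equiv.Perm (Fin N), w (x ∘ π) = 0 := by
    intro x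
    have h := congrFun hw x
    simp only [exg, Pi.zero_apply] at h
    have h3 : (N.factorial : ℝ) ≠ 0 := by exact_mod_cast N.factorial_pos.ne'
    field_simp at h
    simpa using h
  funext x
  rw [Finset.sum_apply]
  simp only [Pi.sub_apply]
  rw [Finset.sum_sub_distrib, hsum x, sub_zero, Finset.sum_const, Finset.card_univ,
    Fintype.card_perm, Fintype.card_fin]
  simp [nsmul_eq_mul]

end ExgLemmas

/- ### Key lemmas about lpr and exchangeability -/

section Main

variable {N : ℕ}

lemma aux_lpr_WA_zero {D : Set ((Fin N → X) → ℝ)} (hD : Coherent D)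
    (hWP : ∀ f ∈ WP X N, lpr D f = 0) {w : (Fin N → X) → ℝ} (hw : w ∈ WA X N) :
    lpr D w = 0 := by
  have key : ∀ v ∈ WA X N, 0 ≤ lpr D v := by
    intro v hv
    have h1 : (0 : ℝ) ≤ lpr D ((N.factorial : ℝ) • v) := by
      have h2 := aux_lpr_sum hD Finset.univ
        (fun π : Equiv.Perm (Fin N) => v - fun x => v (x ∘ π))
      rw [aux_WA_decomp hv] at h2
      have h3 : ∀ π : Equiv.Perm (Fin N), lpr D (v - fun x => v (x ∘ π)) = 0 :=
        fun π => hWP _ ⟨v, π, rfl⟩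
      simpa [h3] using h2
    have hfac : (0 : ℝ) < (N.factorial : ℝ) := by exact_mod_cast N.factorial_pos
    have h4 := aux_lpr_smul hD (c := (N.factorial : ℝ)⁻¹) (by positivity)
      ((N.factorial : ℝ) • v)
    rw [smul_smul, inv_mul_cancel₀ hfac.ne', one_smul] at h4
    have h5 : (0 : ℝ) ≤ (N.factorial : ℝ)⁻¹ * lpr D ((N.factorial : ℝ) • v) :=
      mul_nonneg (by positivity) h1
    linarith
  have h5 := key w hw
  have h6 := key (-w) (aux_WA_neg hw)
  have h7 := aux_lpr_conj hD w
  linarith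

lemma aux_forward {D : Set ((Fin N → X) → ℝ)} (hD : Coherent D)
    (hE : Exchangeable X N D) {f : (Fin N → X) → ℝ} (hf : f ∈ WA X N) :
    lpr D f = 0 := by
  have hub : ∀ μ ∈ {μ : ℝ | (f - fun _ => μ) ∈ D}, μ ≤ 0 := by
    intro μ hμ
    by_contra h
    push_neg at h
    have hmem : (-f) + (f - fun _ => μ) ∈ D := hE (-f) (aux_WA_neg hf) _ hμ
    have he : (-f) + (f - fun _ => μ) = fun _ => -μ := by
      funext x; simp only [Pi.add_apply, Pi.neg_apply, Pi.sub_apply]; ring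
    rw [he] at hmem
    have hc : (fun _ : Fin N → X => μ) ∈ D := aux_pos_mem hD fun _ => h
    have hs := hD.2.2.2 _ hmem _ hc
    have h0 : (fun _ : Fin N → X => -μ) + (fun _ => μ) = (0 : (Fin N → X) → ℝ) := by
      funext x; simp
    rw [h0] at hs
    exact hD.1 hs
  have hlb : ∀ μ : ℝ, μ < 0 → (f - fun _ => μ) ∈ D := by
    intro μ hμ
    have hc : (fun _ : Fin N → X => -μ) ∈ D := aux_pos_mem hD fun _ => by linarith
    have := hE f hf _ hc
    have he : f + (fun _ : Fin N → X => -μ) = f - fun _ => μ := by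
      funext x; simp [sub_eq_add_neg]
    rwa [he] at this
  apply le_antisymm
  · exact csSup_le ⟨-1, hlb (-1) (by norm_num)⟩ hub
  · refine aux_le_of_forall_sub (fun ε hε => ?_)
    have h1 : -ε ≤ lpr D f := le_csSup ⟨0, hub⟩ (hlb (-ε) (by linarith))
    linarith

lemma aux_exists_exch {D : Set ((Fin N → X) → ℝ)} (hD : Coherent D)
    (hWP : ∀ f ∈ WP X N, lpr D f = 0) :
    ∃ D' : Set ((Fin N → X) → ℝ), Coherent D' ∧ Exchangeable X N D' ∧ lpr D = lpr D' := by
  have hWA : ∀ w ∈ WA X N, lpr D w = 0 := fun w hw => aux_lpr_WA_zero hD hWP hw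
  have hP_nonneg : ∀ {g : (Fin N → X) → ℝ}, 0 ≤ g → 0 ≤ lpr D g := by
    intro g hg
    exact aux_inf_le_lpr hD fun x => hg x
  have case2 : ∀ (g w : (Fin N → X) → ℝ), w ∈ WA X N → 0 ≤ g - w → 0 ≤ lpr D g := by
    intro g w hw hgw
    have h := aux_lpr_add hD w (g - w)
    rw [hWA w hw, add_sub_cancel, zero_add] at h
    exact le_trans (hP_nonneg hgw) h
  refine ⟨{f | 0 < lpr D f ∨ ∃ w ∈ WA X N, 0 ≤ f - w ∧ f - w ≠ 0}, ?_, ?_, ?_⟩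
  · refine ⟨?_, ?_, ?_, ?_⟩
    · rintro (h | ⟨w, hw, h1, h2⟩)
      · rw [aux_lpr_zero hD] at h
        exact lt_irrefl 0 h
      · rw [zero_sub] at h1 h2
        have hne := aux_exg_ne_zero (N := N) (by simpa using h1) h2
        rw [aux_exg_neg, hw, neg_zero] at hne
        exact hne rfl
    · intro f h0 hne
      exact Or.inr ⟨0, aux_WA_zero, by simpa using h0, by simpa using hne⟩
    · rintro f (h | ⟨w, hw, h1, h2⟩) c hc
      · left
        have h1 := aux_lpr_smul hD hc f
        have h2 : 0 < c * lpr D f := mul_pos hc h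
        linarith
      · right
        refine ⟨c • w, aux_WA_smul c hw, ?_, ?_⟩
        · rw [← smul_sub]
          exact smul_nonneg hc.le h1
        · rw [← smul_sub]
          exact smul_ne_zero hc.ne' h2
    · rintro f (hf | ⟨w1, hw1, h11, h12⟩) g (hg | ⟨w2, hw2, h21, h22⟩)
      · left
        have := aux_lpr_add hD f g
        linarith
      · left
        have h1 := aux_lpr_add hD f g
        have h2 := case2 g w2 hw2 h21
        linarith
      · left
        have h1 := aux_lpr_add hD f g
        have h2 := case2 f w1 hw1 h11
        linarith
      · right
        refine ⟨w1 + w2, aux_WA_add hw1 hw2, ?_, ?_⟩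
        · have he : f + g - (w1 + w2) = (f - w1) + (g - w2) := by abel
          rw [he]
          exact add_nonneg h11 h21
        · have he : f + g - (w1 + w2) = (f - w1) + (g - w2) := by abel
          rw [he]
          intro h
          apply h12
          funext x
          have hx := congrFun h x
          have h1x := h11 x
          have h2x := h21 x
          simp only [Pi.add_apply, Pi.sub_apply, Pi.zero_apply] at hx h1x h2x ⊢
          linarith
  · rintro w hw g (hg | ⟨w', hw', h1, h2⟩)
    · left
      have h1 := aux_lpr_add hD w g
      rw [hWA w hw] at h1
      linarith
    · right
      refine ⟨w + w', aux_WA_add hw hw', ?_, ?_⟩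
      · have he : w + g - (w + w') = g - w' := by abel
        rw [he]; exact h1
      · have he : w + g - (w + w') = g - w' := by abel
        rw [he]; exact h2
  · funext f
    have hub : ∀ μ ∈ {μ : ℝ | 0 < lpr D (f - fun _ => μ) ∨
        ∃ w ∈ WA X N, 0 ≤ (f - fun _ => μ) - w ∧ (f - fun _ => μ) - w ≠ 0}, μ ≤ lpr D f := by
      rintro μ (h | ⟨w, hw, h1, h2⟩)
      · rw [aux_lpr_shift hD] at h
        linarith
      · have := case2 (f - fun _ => μ) w hw h1
        rw [aux_lpr_shift hD] at this
        linarith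
    have hmemlt : ∀ μ : ℝ, μ < lpr D f → 0 < lpr D (f - fun _ => μ) := by
      intro μ h
      rw [aux_lpr_shift hD]
      linarith
    apply le_antisymm
    · refine aux_le_of_forall_sub (fun ε hε => ?_)
      refine le_csSup ⟨lpr D f, hub⟩ (Or.inl (hmemlt _ (by linarith)))
    · exact csSup_le ⟨lpr D f - 1, Or.inl (hmemlt _ (by linarith))⟩ hub

end Main

theorem exchangeability_of_lower_prevision {N : ℕ} (hN : 1 ≤ N)
    (P : ((Fin N → X) → ℝ) → ℝ)
    (hP : ∃ D : Set ((Fin N → X) → ℝ), Coherent D ∧ P = lpr D) :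
    ((∃ D : Set ((Fin N → X) → ℝ), Coherent D ∧ Exchangeable X N D ∧ P = lpr D) ↔
      ∀ f ∈ WP X N, P f = 0 ∧ -P (-f) = 0) ∧
    ((∃ D : Set ((Fin N → X) → ℝ), Coherent D ∧ Exchangeable X N D ∧ P = lpr D) ↔
      ∀ f ∈ WA X N, P f = 0 ∧ -P (-f) = 0) := by
  obtain ⟨D, hD, rfl⟩ := hP
  have mp : (∃ D' : Set ((Fin N → X) → ℝ), Coherent D' ∧ Exchangeable X N D' ∧
      lpr D = lpr D') → ∀ f ∈ WA X N, lpr D f = 0 ∧ -lpr D (-f) = 0 := by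
    rintro ⟨D', hD', hE', hP'⟩ f hf
    rw [hP']
    refine ⟨aux_forward hD' hE' hf, ?_⟩
    rw [aux_forward hD' hE' (aux_WA_neg hf)]
    ring
  constructor
  · constructor
    · intro h f hf
      exact mp h f (aux_WP_subset_WA hf)
    · intro h
      obtain ⟨D', h1, h2, h3⟩ := aux_exists_exch hD (fun f hf => (h f hf).1)
      exact ⟨D', h1, h2, h3⟩
  · constructor
    · exact mp
    · intro h
      obtain ⟨D', h1, h2, h3⟩ := aux_exists_exch hD
        (fun f hf => (h f (aux_WP_subset_WA hf)).1)
      exact ⟨D', h1, h2, h3⟩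
end

section
/- Say a set A ⊆ G(X^N) avoids non-positivity under exchangeability if the set ({f ∈ G(X^N) : f > 0} ∪ A) + W_{A_N} avoids non-positivity, i.e., no element of posi(({f > 0} ∪ A) + W_{A_N}) is pointwise ≤ 0. Then: (i) the empty set avoids non-positivity under exchangeability; (ii) a nonempty set A ⊆ G(X^N) avoids non-positivity under exchangeability if and only if A + W_{A_N} avoids non-positivity (no element of posi(A + W_{A_N}) is pointwise ≤ 0). -/
variable {X : Type*} [Fintype X] [DecidableEq X] [Nonempty X]

/-- The positive hull of a set of gambles: all finite strictly positive linear combinations. -/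
def posi {Y : Type*} (A : Set (Y → ℝ)) : Set (Y → ℝ) :=
  {g | ∃ n : ℕ, 0 < n ∧ ∃ (c : Fin n → ℝ) (f : Fin n → Y → ℝ),
    (∀ k, 0 < c k) ∧ (∀ k, f k ∈ A) ∧ g = ∑ k, c k • f k}

open Pointwise

/-- `A` avoids non-positivity under exchangeability: no element of
`posi(({f > 0} ∪ A) + W_{A_N})` is pointwise `≤ 0`. -/
def ANPE (X : Type*) (N : ℕ) (A : Set ((Fin N → X) → ℝ)) : Prop :=
  ∀ g ∈ posi (({f : (Fin N → X) → ℝ | 0 ≤ f ∧ f ≠ 0} ∪ A) + WA X N), ¬ g ≤ 0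
section Helpers

lemma exg_add' {Y : Type*} {N : ℕ} (f g : (Fin N → Y) → ℝ) :
    exg N (f + g) = exg N f + exg N g := by
  funext x
  simp [exg, Finset.sum_add_distrib, add_div]

lemma exg_smul' {Y : Type*} {N : ℕ} (c : ℝ) (f : (Fin N → Y) → ℝ) :
    exg N (c • f) = c • exg N f := by
  funext x
  simp [exg, ← Finset.mul_sum, mul_div_assoc]

noncomputable def exgLM (Y : Type*) (N : ℕ) :
    ((Fin N → Y) → ℝ) →ₗ[ℝ] ((Fin N → Y) → ℝ) :=
  { toFun := exg N, map_add' := exg_add', map_smul' := exg_smul' }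

lemma exgLM_apply {Y : Type*} {N : ℕ} (f : (Fin N → Y) → ℝ) : exgLM Y N f = exg N f := rfl

lemma WA_add {Y : Type*} {N : ℕ} {f g : (Fin N → Y) → ℝ}
    (hf : f ∈ WA Y N) (hg : g ∈ WA Y N) : f + g ∈ WA Y N := by
  have hf' : exg N f = 0 := hf
  have hg' : exg N g = 0 := hg
  show exg N (f + g) = 0
  rw [exg_add', hf', hg', add_zero]

lemma WA_smul {Y : Type*} {N : ℕ} (c : ℝ) {f : (Fin N → Y) → ℝ}
    (hf : f ∈ WA Y N) : c • f ∈ WA Y N := by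
  have hf' : exg N f = 0 := hf
  show exg N (c • f) = 0
  rw [exg_smul', hf', smul_zero]

lemma WA_zero {Y : Type*} {N : ℕ} : (0 : (Fin N → Y) → ℝ) ∈ WA Y N := by
  show exg N 0 = 0
  funext x; simp [exg]

lemma WA_sum {Y : Type*} {N : ℕ} {ι : Type*} (s : Finset ι) (c : ι → ℝ)
    (w : ι → (Fin N → Y) → ℝ) (hw : ∀ k ∈ s, w k ∈ WA Y N) :
    (∑ k ∈ s, c k • w k) ∈ WA Y N := by
  classical
  induction s using Finset.induction with
  | empty => simpa using (WA_zero : (0 : (Fin N → Y) → ℝ) ∈ WA Y N)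
  | insert _ _ hk ih =>
    rw [Finset.sum_insert hk]
    exact WA_add (WA_smul _ (hw _ (Finset.mem_insert_self _ _)))
      (ih fun k hks => hw k (Finset.mem_insert_of_mem hks))

lemma exg_nonneg' {Y : Type*} {N : ℕ} {f : (Fin N → Y) → ℝ} (hf : 0 ≤ f) (x : Fin N → Y) :
    0 ≤ exg N f x := by
  apply div_nonneg
  · exact Finset.sum_nonneg fun π _ => hf (x ∘ π)
  · positivity

lemma exg_nonpos' {Y : Type*} {N : ℕ} {f : (Fin N → Y) → ℝ} (hf : f ≤ 0) (x : Fin N → Y) :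
    exg N f x ≤ 0 := by
  apply div_nonpos_of_nonpos_of_nonneg
  · exact Finset.sum_nonpos fun π _ => hf (x ∘ π)
  · positivity

lemma exg_pos' {Y : Type*} {N : ℕ} {f : (Fin N → Y) → ℝ} (hf : 0 ≤ f) (hne : f ≠ 0) :
    ∃ x, 0 < exg N f x := by
  obtain ⟨x, hx⟩ := Function.ne_iff.mp hne
  have hx' : 0 < f x := lt_of_le_of_ne (hf x) (Ne.symm hx)
  refine ⟨x, div_pos ?_ (by positivity)⟩
  have h1 : f (x ∘ ⇑(1 : Equiv.Perm (Fin N))) ≤ ∑ π : Equiv.Perm (Fin N), f (x ∘ ⇑π) :=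
    Finset.single_le_sum (f := fun π : Equiv.Perm (Fin N) => f (x ∘ ⇑π))
      (fun π _ => hf (x ∘ π)) (Finset.mem_univ 1)
  have h2 : x ∘ ⇑(1 : Equiv.Perm (Fin N)) = x := by
    funext i; simp
  rw [h2] at h1
  exact lt_of_lt_of_le hx' h1

lemma exg_combo {Y : Type*} {N : ℕ} {n : ℕ} (c : Fin n → ℝ)
    (f w : Fin n → (Fin N → Y) → ℝ) (hw : ∀ k, w k ∈ WA Y N) :
    exg N (∑ k, c k • (f k + w k)) = ∑ k, c k • exg N (f k) := by
  rw [← exgLM_apply, map_sum]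
  refine Finset.sum_congr rfl fun k _ => ?_
  rw [map_smul, map_add]
  have h0 : exg N (w k) = 0 := hw k
  show c k • (exg N (f k) + exg N (w k)) = c k • exg N (f k)
  rw [h0, add_zero]

lemma posP {Y : Type*} {N : ℕ} {n : ℕ} (hn : 0 < n) (c : Fin n → ℝ)
    (f w : Fin n → (Fin N → Y) → ℝ) (hc : ∀ k, 0 < c k)
    (hf : ∀ k, 0 ≤ f k ∧ f k ≠ 0) (hw : ∀ k, w k ∈ WA Y N) :
    ¬ (∑ k, c k • (f k + w k)) ≤ 0 := by
  intro hle
  set k0 : Fin n := ⟨0, hn⟩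
  obtain ⟨x, hx⟩ := exg_pos' (hf k0).1 (hf k0).2
  have h1 : exg N (∑ k, c k • (f k + w k)) x ≤ 0 := exg_nonpos' hle x
  rw [exg_combo c f w hw] at h1
  have h2 : 0 < (∑ k, c k • exg N (f k)) x := by
    rw [Finset.sum_apply]
    refine Finset.sum_pos' (fun k _ => ?_) ⟨k0, Finset.mem_univ _, ?_⟩
    · exact mul_nonneg (hc k).le (exg_nonneg' (hf k).1 x)
    · exact mul_pos (hc k0) hx
  linarith

lemma sum_mem_posi {Y : Type*} {A : Set (Y → ℝ)} {ι : Type*} (T : Finset ι) (hT : T.Nonempty)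
    (c : ι → ℝ) (f : ι → Y → ℝ) (hc : ∀ k ∈ T, 0 < c k) (hf : ∀ k ∈ T, f k ∈ A) :
    (∑ k ∈ T, c k • f k) ∈ posi A := by
  refine ⟨T.card, Finset.card_pos.mpr hT,
    fun i => c (T.equivFin.symm i), fun i => f (T.equivFin.symm i),
    fun i => hc _ (T.equivFin.symm i).2, fun i => hf _ (T.equivFin.symm i).2, ?_⟩
  rw [← Finset.sum_attach T (fun k => c k • f k)]
  exact (Fintype.sum_equiv T.equivFin.symm _ _ (fun i => rfl)).symm

lemma posi_mono {Y : Type*} {A B : Set (Y → ℝ)} (hAB : A ⊆ B) : posi A ⊆ posi B := by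
  rintro g ⟨n, hn, c, f, hc, hf, rfl⟩
  exact ⟨n, hn, c, f, hc, fun k => hAB (hf k), rfl⟩

end Helpers
theorem avoiding_nonpositivity_under_exchangeability {N : ℕ} (hN : 1 ≤ N) :
    ANPE X N (∅ : Set ((Fin N → X) → ℝ)) ∧
    ∀ A : Set ((Fin N → X) → ℝ), A.Nonempty →
      (ANPE X N A ↔ ∀ g ∈ posi (A + WA X N), ¬ g ≤ 0) := by
  classical
  constructor
  · rintro g ⟨n, hn, c, F, hc, hF, rfl⟩ hle
    choose f hf w hw hFw using fun k => Set.mem_add.mp (hF k)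
    have hFeq : F = fun k => f k + w k := funext fun k => (hFw k).symm
    have hfP : ∀ k, 0 ≤ f k ∧ f k ≠ 0 := fun k => by
      have := hf k; simpa using this
    refine posP hn c f w hc hfP hw ?_
    rw [hFeq] at hle
    simpa using hle
  · rintro A ⟨a0, ha0⟩
    constructor
    · intro hA g hg
      exact hA g (posi_mono (Set.add_subset_add_right Set.subset_union_right) hg)
    · rintro H g ⟨n, hn, c, F, hc, hF, rfl⟩ hle
      choose f hf w hw hFw using fun k => Set.mem_add.mp (hF k)
      have hFeq : F = fun k => f k + w k := funext fun k => (hFw k).symm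
      simp only [hFeq] at hle
      set S : Finset (Fin n) := Finset.univ.filter (fun k => f k ∈ A) with hSdef
      by_cases hSne : S.Nonempty
      · obtain ⟨j, hj⟩ := hSne
        have hcj : (0:ℝ) < c j := hc j
        set W : (Fin N → X) → ℝ := ∑ k ∈ Sᶜ, c k • w k with hWdef
        have hWmem : W ∈ WA X N := WA_sum _ _ _ (fun k _ => hw k)
        set w' : Fin n → (Fin N → X) → ℝ :=
          fun k => w k + (if k = j then (c j)⁻¹ • W else 0) with hw'def
        have hw'mem : ∀ k, w' k ∈ WA X N := by
          intro k
          refine WA_add (hw k) ?_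
          by_cases hkj : k = j
          · simp only [hkj, if_pos rfl]
            exact WA_smul _ hWmem
          · simp only [if_neg hkj]
            exact WA_zero
        set h : (Fin N → X) → ℝ := ∑ k ∈ S, c k • (f k + w' k) with hhdef
        have hsplit : h = (∑ k ∈ S, c k • (f k + w k)) + W := by
          rw [hhdef, hw'def]
          have : ∀ k ∈ S, c k • (f k + (w k + (if k = j then (c j)⁻¹ • W else 0)))
              = c k • (f k + w k) + (if k = j then c k • ((c j)⁻¹ • W) else 0) := by
            intro k _
            by_cases hkj : k = j
            · simp [hkj, smul_add, add_assoc]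
            · simp [hkj]
          rw [Finset.sum_congr rfl this, Finset.sum_add_distrib]
          congr 1
          rw [Finset.sum_ite_eq' S j (fun k => c k • ((c j)⁻¹ • W)), if_pos hj,
            smul_smul, mul_inv_cancel₀ hcj.ne', one_smul]
        have hgsplit : (∑ k, c k • (f k + w k)) = h + ∑ k ∈ Sᶜ, c k • f k := by
          rw [hsplit, hWdef]
          rw [← Finset.sum_add_sum_compl S (fun k => c k • (f k + w k))]
          have : ∀ k ∈ Sᶜ, c k • (f k + w k) = c k • f k + c k • w k := fun k _ => smul_add _ _ _
          rw [Finset.sum_congr rfl this, Finset.sum_add_distrib]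
          abel
        have hcompl : ∀ k ∈ Sᶜ, 0 ≤ f k := by
          intro k hk
          have hknA : f k ∉ A := by
            intro hkA
            exact (Finset.mem_compl.mp hk) (Finset.mem_filter.mpr ⟨Finset.mem_univ k, hkA⟩)
          have := (hf k).resolve_right hknA
          exact this.1
        have hhle : h ≤ 0 := by
          intro x
          show h x ≤ 0
          have h1 : h x + (∑ k ∈ Sᶜ, c k • f k) x ≤ 0 := by
            have h1' := hle x
            rw [hgsplit] at h1'
            simpa using h1'
          have h2 : 0 ≤ (∑ k ∈ Sᶜ, c k • f k) x := by
            rw [Finset.sum_apply]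
            exact Finset.sum_nonneg fun k hk =>
              mul_nonneg (hc k).le (hcompl k hk x)
          linarith
        have hhmem : h ∈ posi (A + WA X N) := by
          rw [hhdef]
          refine sum_mem_posi S ⟨j, hj⟩ c (fun k => f k + w' k) (fun k _ => hc k) ?_
          intro k hk
          exact Set.add_mem_add (Finset.mem_filter.mp hk).2 (hw'mem k)
        exact H h hhmem hhle
      · have hfP : ∀ k, 0 ≤ f k ∧ f k ≠ 0 := by
          intro k
          refine (hf k).resolve_right fun hkA => hSne ⟨k, ?_⟩
          exact Finset.mem_filter.mpr ⟨Finset.mem_univ k, hkA⟩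
        exact posP hn c f w hc hfP hw hle
end

section
/- A set of gambles D ⊆ G(X^N) is coherent and exchangeable if and only if there exists a coherent set D_c ⊆ G(N^N_X) of gambles on count vectors such that D = (Hy^N)^{-1}(D_c) = {f ∈ G(X^N) : Hy^N(f) ∈ D_c}; and in that case D_c is uniquely determined, with D_c = Hy^N(D) = {g ∈ G(N^N_X) : g ∘ T^N ∈ D}. -/
variable {X : Type*} [Fintype X] [DecidableEq X] [Nonempty X]

/-- The counting map: `countVec x z` is the number of indices `k` with `x k = z`. -/
def countVec {X : Type*} [Fintype X] [DecidableEq X] {n : ℕ} (x : Fin n → X) : X → ℕ :=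
  fun z => (Finset.univ.filter fun k => x k = z).card

lemma sum_countVec {X : Type*} [Fintype X] [DecidableEq X] {n : ℕ} (x : Fin n → X) :
    ∑ z, countVec x z = n := by
  classical
  have h := Finset.card_eq_sum_card_fiberwise
    (s := (Finset.univ : Finset (Fin n))) (t := (Finset.univ : Finset X))
    (f := x) (fun a _ => Finset.mem_univ _)
  simpa [countVec, Finset.card_fin] using h.symm

/-- `N^N_X`: the set of count vectors, i.e. maps `m : X → ℕ` with `∑ m = N`. -/
abbrev CV (X : Type*) [Fintype X] (N : ℕ) := {m : X → ℕ // ∑ z, m z = N}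

/-- The counting map `T^N : X^N → N^N_X`. -/
def Tmap {X : Type*} [Fintype X] [DecidableEq X] {N : ℕ} (x : Fin N → X) : CV X N :=
  ⟨countVec x, sum_countVec x⟩

/-- `Hy^N(f)`: the count gamble `m ↦ (1/|[m]|) ∑_{y ∈ [m]} f(y)`, where
`[m]` is the set of sequences with count vector `m`. -/
noncomputable def hy {X : Type*} [Fintype X] [DecidableEq X] {N : ℕ}
    (f : (Fin N → X) → ℝ) : CV X N → ℝ :=
  fun m => (∑ y ∈ Finset.univ.filter (fun x : Fin N → X => Tmap x = m), f y) /
    ((Finset.univ.filter (fun x : Fin N → X => Tmap x = m)).card : ℝ)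


set_option linter.unusedSectionVars false

section Aux
variable {X : Type*} [Fintype X] [DecidableEq X] [Nonempty X] {N : ℕ}

lemma count_ofFn_aux (z : X) : ∀ {n : ℕ} (x : Fin n → X),
    (List.ofFn x).count z = ∑ k, if x k = z then 1 else 0
  | 0, x => by simp
  | n+1, x => by
    rw [List.ofFn_succ, List.count_cons, Fin.sum_univ_succ, count_ofFn_aux z]
    rcases eq_or_ne (x 0) z with h0 | h0
    · simp [h0, add_comm]
    · simp [h0, Ne.symm h0]

lemma count_ofFn {n : ℕ} (x : Fin n → X) (z : X) :
    (List.ofFn x).count z = countVec x z := by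
  rw [count_ofFn_aux, ← Finset.card_filter]
  rfl

lemma tmap_surjective : Function.Surjective (Tmap : (Fin N → X) → CV X N) := by
  rintro ⟨m, hm⟩
  set l : List X := Finset.univ.toList.flatMap (fun z => List.replicate (m z) z) with hl
  have hcount : ∀ z, l.count z = m z := by
    intro z
    rw [hl, List.count_flatMap]
    have h2 : (List.count z ∘ fun z' => List.replicate (m z') z')
        = fun z' => if z' = z then m z' else 0 := by
      funext z'; simp [List.count_replicate]
    rw [h2, Finset.sum_map_toList]
    simp
  have hlen : l.length = N := by
    rw [hl, List.length_flatMap]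
    rw [show (List.map (fun a => (List.replicate (m a) a).length) Finset.univ.toList)
        = Finset.univ.toList.map m by simp [Function.comp]]
    rw [Finset.sum_map_toList]
    exact hm
  refine ⟨fun k => l.get (Fin.cast hlen.symm k), ?_⟩
  apply Subtype.ext
  funext z
  have h3 : List.ofFn (fun k : Fin N => l.get (Fin.cast hlen.symm k)) = l :=
    (List.ofFn_congr hlen l.get).symm.trans (List.ofFn_get l)
  have h4 := count_ofFn (fun k : Fin N => l.get (Fin.cast hlen.symm k)) z
  rw [h3, hcount] at h4
  exact h4.symm

lemma tmap_comp_perm (x : Fin N → X) (σ : Equiv.Perm (Fin N)) :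
    Tmap (x ∘ σ) = Tmap x := by
  apply Subtype.ext; funext z
  have h := (σ.ofFn_comp_perm x).count_eq z
  rwa [count_ofFn, count_ofFn] at h

lemma exists_perm_of_tmap_eq {x y : Fin N → X} (h : Tmap x = Tmap y) :
    ∃ σ : Equiv.Perm (Fin N), x ∘ σ = y := by
  classical
  have hperm : List.Perm (List.ofFn x) (List.ofFn y) := by
    rw [List.perm_iff_count]
    intro z
    rw [count_ofFn, count_ofFn]
    exact congrFun (congrArg Subtype.val h) z
  set e := Fintype.equivFin X
  have hperm' : List.Perm (List.ofFn (⇑e ∘ x)) (List.ofFn (⇑e ∘ y)) := by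
    rw [← List.map_ofFn, ← List.map_ofFn]
    exact hperm.map e
  set sx := Tuple.sort (⇑e ∘ x)
  set sy := Tuple.sort (⇑e ∘ y)
  have h1 : (⇑e ∘ x) ∘ sx = (⇑e ∘ y) ∘ sy := by
    apply List.ofFn_injective
    refine (fun h1 h2 h3 => List.Perm.eq_of_sortedLE h2 h3 h1) ?_ ?_ ?_
    · exact ((sx.ofFn_comp_perm (⇑e ∘ x)).trans hperm').trans
        (sy.ofFn_comp_perm (⇑e ∘ y)).symm
    · exact List.sortedLE_ofFn_iff.2 (Tuple.monotone_sort _)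
    · exact List.sortedLE_ofFn_iff.2 (Tuple.monotone_sort _)
  refine ⟨sx * sy⁻¹, ?_⟩
  funext k
  have h2 := congrFun h1 (sy⁻¹ k)
  simp only [Function.comp_apply, ← Equiv.Perm.mul_apply, mul_inv_cancel, Equiv.Perm.one_apply] at h2
  exact e.injective h2

/-- The atom of a count vector. -/
noncomputable def atom (m : CV X N) : Finset (Fin N → X) :=
  Finset.univ.filter (fun x : Fin N → X => Tmap x = m)

lemma atom_nonempty (m : CV X N) : (atom m).Nonempty := by
  obtain ⟨x, hx⟩ := tmap_surjective m
  exact ⟨x, by simp [atom, hx]⟩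

lemma hy_def (f : (Fin N → X) → ℝ) (m : CV X N) :
    hy f m = (∑ y ∈ atom m, f y) / ((atom m).card : ℝ) := rfl

lemma exg_eq_hy (f : (Fin N → X) → ℝ) : exg N f = (hy f) ∘ Tmap := by
  funext x
  classical
  set m := Tmap x with hm
  set c := (Finset.univ.filter (fun π : Equiv.Perm (Fin N) => x ∘ π = x)).card with hc
  have key : ∀ g : (Fin N → X) → ℝ,
      ∑ π : Equiv.Perm (Fin N), g (x ∘ π) = c * ∑ y ∈ atom m, g y := by
    intro g
    have hmaps : ∀ π : Equiv.Perm (Fin N), π ∈ Finset.univ → x ∘ π ∈ atom m := by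
      intro π _
      simp [atom, tmap_comp_perm, hm]
    rw [← Finset.sum_fiberwise_of_maps_to hmaps (fun π => g (x ∘ π))]
    rw [Finset.mul_sum]
    apply Finset.sum_congr rfl
    intro y hy
    have hym : Tmap y = m := by simpa [atom] using hy
    obtain ⟨σ, hσ⟩ := exists_perm_of_tmap_eq (hm ▸ hym : Tmap y = Tmap x).symm
    have hfix : ∀ π ∈ Finset.univ.filter (fun π : Equiv.Perm (Fin N) => x ∘ π = y),
        g (x ∘ π) = g y := by
      intro π hπ
      rw [(Finset.mem_filter.1 hπ).2]
    rw [Finset.sum_congr rfl hfix, Finset.sum_const, nsmul_eq_mul]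
    congr 2
    -- card of fiber over y equals c, via π ↦ π * σ
    rw [hc]
    apply Finset.card_bij (fun π _ => π * σ⁻¹)
    · intro π hπ
      have hπ' := (Finset.mem_filter.1 hπ).2
      simp only [Finset.mem_filter, Finset.mem_univ, true_and]
      funext k
      show x (π (σ⁻¹ k)) = x k
      rw [show x (π (σ⁻¹ k)) = (x ∘ π) (σ⁻¹ k) from rfl, hπ']
      rw [show y (σ⁻¹ k) = (x ∘ σ) (σ⁻¹ k) from (congrFun hσ _).symm]
      simp
    · intro π₁ _ π₂ _ hmul
      exact mul_right_cancel hmul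
    · intro τ hτ
      refine ⟨τ * σ, ?_, by group⟩
      have hτ' := (Finset.mem_filter.1 hτ).2
      simp only [Finset.mem_filter, Finset.mem_univ, true_and]
      funext k
      show x (τ (σ k)) = y k
      rw [show x (τ (σ k)) = (x ∘ τ) (σ k) from rfl, hτ']
      exact congrFun hσ k
  have hcard : (N.factorial : ℝ) = c * ((atom m).card : ℝ) := by
    have h1 := key (fun _ => (1 : ℝ))
    simpa [Finset.card_univ, Fintype.card_perm] using h1
  have hcpos : 0 < c := by
    rw [hc]
    apply Finset.card_pos.2
    exact ⟨1, by simp⟩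
  show (∑ π : Equiv.Perm (Fin N), f (x ∘ π)) / (N.factorial : ℝ) = hy f m
  rw [key f, hy_def, hcard]
  rw [mul_div_mul_left _ _ (by exact_mod_cast hcpos.ne')]

lemma hy_comp_tmap (g : CV X N → ℝ) : hy (g ∘ Tmap) = g := by
  funext m
  rw [hy_def]
  have h1 : ∀ y ∈ atom m, (g ∘ Tmap) y = g m := by
    intro y hy
    have : Tmap y = m := by simpa [atom] using hy
    simp [this]
  rw [Finset.sum_congr rfl h1, Finset.sum_const, nsmul_eq_mul]
  have hcard : (0 : ℝ) < (atom m).card := by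
    exact_mod_cast Finset.card_pos.2 (atom_nonempty m)
  field_simp

lemma hy_add (f g : (Fin N → X) → ℝ) : hy (f + g) = hy f + hy g := by
  funext m
  simp only [hy_def, Pi.add_apply, Finset.sum_add_distrib]
  rw [add_div]

lemma hy_smul (c : ℝ) (f : (Fin N → X) → ℝ) : hy (c • f) = c • hy f := by
  funext m
  simp only [hy_def, Pi.smul_apply, smul_eq_mul, ← Finset.mul_sum]
  rw [mul_div_assoc]

lemma hy_zero : hy (0 : (Fin N → X) → ℝ) = 0 := by
  funext m
  simp [hy_def]

lemma mem_WA_iff {f : (Fin N → X) → ℝ} : f ∈ WA X N ↔ hy f = 0 := by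
  constructor
  · intro h
    funext m
    obtain ⟨x, hx⟩ := tmap_surjective m
    have := congrFun ((exg_eq_hy f).symm.trans h) x
    simpa [hx] using this
  · intro h
    show exg N f = 0
    rw [exg_eq_hy, h]
    rfl

lemma exg_sub_self_mem_WA (f : (Fin N → X) → ℝ) : exg N f - f ∈ WA X N := by
  rw [mem_WA_iff]
  have h1 : exg N f - f = hy f ∘ Tmap + (-1 : ℝ) • f := by
    rw [exg_eq_hy]; funext x; simp [sub_eq_add_neg]
  rw [h1, hy_add, hy_comp_tmap, hy_smul]
  funext m; simp

lemma hy_nonneg {f : (Fin N → X) → ℝ} (hf : 0 ≤ f) : 0 ≤ hy f := by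
  intro m
  rw [hy_def]
  apply div_nonneg
  · exact Finset.sum_nonneg fun y _ => hf y
  · positivity

lemma hy_ne_zero {f : (Fin N → X) → ℝ} (hf : 0 ≤ f) (hf0 : f ≠ 0) : hy f ≠ 0 := by
  obtain ⟨x₀, hx₀⟩ : ∃ x₀, f x₀ ≠ 0 := by
    by_contra h
    push_neg at h
    exact hf0 (funext h)
  have hx₀pos : 0 < f x₀ := lt_of_le_of_ne (hf x₀) (Ne.symm hx₀)
  intro h
  have h1 := congrFun h (Tmap x₀)
  rw [hy_def] at h1
  have hmem : x₀ ∈ atom (Tmap x₀) := by simp [atom]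
  have hsum : 0 < ∑ y ∈ atom (Tmap x₀), f y :=
    lt_of_lt_of_le hx₀pos (Finset.single_le_sum (fun y _ => hf y) hmem)
  have hcard : (0 : ℝ) < (atom (Tmap x₀)).card := by
    exact_mod_cast Finset.card_pos.2 ⟨x₀, hmem⟩
  exact absurd h1 (ne_of_gt (div_pos hsum hcard))

end Aux

theorem finite_representation {N : ℕ} (hN : 1 ≤ N) (D : Set ((Fin N → X) → ℝ)) :
    ((Coherent D ∧ Exchangeable X N D) ↔
      ∃ Dc : Set (CV X N → ℝ), Coherent Dc ∧ D = {f | hy f ∈ Dc}) ∧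
    ∀ Dc : Set (CV X N → ℝ), Coherent Dc → D = {f | hy f ∈ Dc} →
      Dc = hy '' D ∧ Dc = {g : CV X N → ℝ | g ∘ Tmap ∈ D} := by
  constructor
  · constructor
    · rintro ⟨⟨hD0, hDpos, hDsmul, hDadd⟩, hEx⟩
      refine ⟨hy '' D, ⟨?_, ?_, ?_, ?_⟩, ?_⟩
      · rintro ⟨f, hf, hf0⟩
        have hWA : -f ∈ WA X N := by
          rw [mem_WA_iff, show -f = (-1 : ℝ) • f from (neg_one_smul ℝ f).symm,
            hy_smul, hf0, smul_zero]
        have h1 := hEx (-f) hWA f hf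
        rw [neg_add_cancel] at h1
        exact hD0 h1
      · intro g hg hg0
        refine ⟨g ∘ Tmap, hDpos _ (fun x => hg (Tmap x)) ?_, hy_comp_tmap g⟩
        intro h
        apply hg0
        funext m
        obtain ⟨x, hx⟩ := tmap_surjective m
        have := congrFun h x
        simpa [hx] using this
      · rintro _ ⟨f, hf, rfl⟩ c hc
        exact ⟨c • f, hDsmul f hf c hc, hy_smul c f⟩
      · rintro _ ⟨f, hf, rfl⟩ _ ⟨g, hg, rfl⟩
        exact ⟨f + g, hDadd f hf g hg, hy_add f g⟩
      · ext f
        constructor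
        · intro hf
          exact ⟨f, hf, rfl⟩
        · rintro ⟨f', hf', heq⟩
          have hWA1 : exg N f' - f' ∈ WA X N := exg_sub_self_mem_WA f'
          have h2 : f - exg N f' ∈ WA X N := by
            rw [mem_WA_iff]
            have h3 : f - exg N f' = f + (-1 : ℝ) • (hy f' ∘ Tmap) := by
              rw [exg_eq_hy]; funext x; simp [sub_eq_add_neg]
            rw [h3, hy_add, hy_smul, hy_comp_tmap, heq]
            funext m; simp
          have h4 := hEx _ h2 _ (hEx _ hWA1 f' hf')
          have h5 : (f - exg N f') + ((exg N f' - f') + f') = f := by abel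
          rwa [h5] at h4
    · rintro ⟨Dc, ⟨h0, hpos, hsmul, hadd⟩, rfl⟩
      refine ⟨⟨?_, ?_, ?_, ?_⟩, ?_⟩
      · intro h
        rw [Set.mem_setOf_eq, hy_zero] at h
        exact h0 h
      · intro f hf hf0
        exact hpos _ (hy_nonneg hf) (hy_ne_zero hf hf0)
      · intro f hf c hc
        show hy (c • f) ∈ Dc
        rw [hy_smul]
        exact hsmul _ hf c hc
      · intro f hf g hg
        show hy (f + g) ∈ Dc
        rw [hy_add]
        exact hadd _ hf _ hg
      · intro f hfWA g hg
        show hy (f + g) ∈ Dc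
        rw [hy_add, mem_WA_iff.1 hfWA, zero_add]
        exact hg
  · intro Dc hDc hD
    constructor
    · apply Set.Subset.antisymm
      · intro g hg
        refine ⟨g ∘ Tmap, ?_, hy_comp_tmap g⟩
        rw [hD]
        show hy (g ∘ Tmap) ∈ Dc
        rwa [hy_comp_tmap]
      · rintro _ ⟨f, hf, rfl⟩
        rw [hD] at hf
        exact hf
    · ext g
      rw [Set.mem_setOf_eq, hD, Set.mem_setOf_eq, hy_comp_tmap]
end
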